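/- Let r be a real number and let (p_m, q_m)_{m≥1} be integers with p_m ≥ 2, q_m ≥ 1 and 0 < |r·p_m − q_m| < p_m^{−m} for all m ≥ 1. Then for every natural number k, the series ∑_{m=1}^∞ m·p_m^{−m}·(2π·max{p_m, q_m})^k converges (i.e., the family of terms is summable). -/

import Mathlib

open Real

/-- If `p_m ≥ 2`, `q_m ≥ 1` and `0 < |r p_m − q_m| < p_m^{−m}` for all `m ≥ 1`,
then for every natural `k` the series `∑_{m≥1} m p_m^{−m} (2π max{p_m, q_m})^k` converges. -/
theorem stmt3 (r : ℝ) (p q : ℕ → ℤ)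
    (hp : ∀ m : ℕ, 1 ≤ m → 2 ≤ p m) (hq : ∀ m : ℕ, 1 ≤ m → 1 ≤ q m)
    (happrox : ∀ m : ℕ, 1 ≤ m →
      0 < |r * (p m : ℝ) - (q m : ℝ)| ∧
      |r * (p m : ℝ) - (q m : ℝ)| < (((p m : ℝ)) ^ m)⁻¹) :
    ∀ k : ℕ, Summable (fun m : ℕ =>
      (m : ℝ) * (((p m : ℝ)) ^ m)⁻¹ * (2 * π * max (p m : ℝ) (q m : ℝ)) ^ k) := by
  intro k
  have hπ : (0:ℝ) < π := Real.pi_pos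
  set B : ℝ := 2 * π * (|r| + 1) with hB
  have hB0 : 0 < B := by positivity
  clear_value B
  have hsum : Summable (fun m : ℕ => (2*B)^k * ((m:ℝ) * (1/2)^m)) := by
    have := summable_pow_mul_geometric_of_norm_lt_one (R := ℝ) 1
      (r := (1:ℝ)/2) (by norm_num)
    simpa [pow_one] using this.mul_left ((2*B)^k)
  apply Summable.of_norm_bounded_eventually_nat hsum
  filter_upwards [Filter.eventually_ge_atTop (k+1)] with m hm
  have hm1 : 1 ≤ m := le_trans (Nat.le_add_left 1 k) hm
  have hp2 : (2:ℝ) ≤ (p m : ℝ) := by exact_mod_cast hp m hm1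
  have hp0 : (0:ℝ) < (p m : ℝ) := by linarith
  have hq1 : (1:ℝ) ≤ (q m : ℝ) := by exact_mod_cast hq m hm1
  obtain ⟨hpos, hlt⟩ := happrox m hm1
  -- q m ≤ (|r|+1) * p m
  have hpm1 : (1:ℝ) ≤ (p m : ℝ) ^ m := one_le_pow₀ (by linarith)
  have hinv1 : (((p m : ℝ)) ^ m)⁻¹ ≤ 1 := inv_le_one_of_one_le₀ hpm1
  have hqbound : (q m : ℝ) ≤ (|r| + 1) * (p m : ℝ) := by
    have h1 : (q m : ℝ) - r * (p m : ℝ) ≤ |r * (p m : ℝ) - (q m : ℝ)| := by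
      rw [abs_sub_comm]; exact le_abs_self _
    have h2 : (q m : ℝ) < r * (p m : ℝ) + 1 := by linarith
    have h3 : r * (p m : ℝ) ≤ |r| * (p m : ℝ) :=
      mul_le_mul_of_nonneg_right (le_abs_self r) (le_of_lt hp0)
    nlinarith [abs_nonneg r]
  have hmax : max (p m : ℝ) (q m : ℝ) ≤ (|r| + 1) * (p m : ℝ) := by
    apply max_le _ hqbound
    nlinarith [abs_nonneg r]
  have hmaxpos : (0:ℝ) < max (p m : ℝ) (q m : ℝ) := lt_of_lt_of_le hp0 (le_max_left _ _)
  -- main bound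
  have hterm : (m : ℝ) * (((p m : ℝ)) ^ m)⁻¹ * (2 * π * max (p m : ℝ) (q m : ℝ)) ^ k
      ≤ (2*B)^k * ((m:ℝ) * (1/2)^m) := by
    have h1 : (2 * π * max (p m : ℝ) (q m : ℝ)) ^ k ≤ (B * (p m : ℝ)) ^ k := by
      apply pow_le_pow_left₀ (by positivity)
      rw [hB]; nlinarith
    have h2 : (((p m : ℝ)) ^ m)⁻¹ * (p m : ℝ) ^ k ≤ 2^k * (1/2 : ℝ)^m := by
      have hk : k ≤ m := le_trans (Nat.le_succ k) hm
      have e1 : ((p m : ℝ) ^ m)⁻¹ * (p m : ℝ) ^ k = ((p m : ℝ) ^ (m - k))⁻¹ := by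
        rw [pow_sub₀ _ (ne_of_gt hp0) hk, mul_inv, inv_inv, mul_comm]
      have e2 : ((2:ℝ) ^ m)⁻¹ * (2:ℝ) ^ k = ((2:ℝ) ^ (m - k))⁻¹ := by
        rw [pow_sub₀ (2:ℝ) (by norm_num) hk, mul_inv, inv_inv, mul_comm]
      have h3 : ((2:ℝ) ^ (m-k)) ≤ (p m : ℝ) ^ (m-k) := pow_le_pow_left₀ (by norm_num) hp2 _
      have h4 : ((p m : ℝ) ^ (m - k))⁻¹ ≤ ((2:ℝ) ^ (m - k))⁻¹ := by
        apply inv_anti₀ (by positivity) h3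
      calc ((p m : ℝ) ^ m)⁻¹ * (p m : ℝ) ^ k = ((p m : ℝ) ^ (m - k))⁻¹ := e1
        _ ≤ ((2:ℝ) ^ (m - k))⁻¹ := h4
        _ = ((2:ℝ)^m)⁻¹ * 2^k := e2.symm
        _ = 2^k * (1/2:ℝ)^m := by rw [one_div, inv_pow]; ring
    calc (m : ℝ) * (((p m : ℝ)) ^ m)⁻¹ * (2 * π * max (p m : ℝ) (q m : ℝ)) ^ k
        ≤ (m : ℝ) * (((p m : ℝ)) ^ m)⁻¹ * (B * (p m : ℝ)) ^ k := by
          apply mul_le_mul_of_nonneg_left h1 (by positivity)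
      _ = (m : ℝ) * B^k * ((((p m : ℝ)) ^ m)⁻¹ * (p m : ℝ)^k) := by rw [mul_pow]; ring
      _ ≤ (m : ℝ) * B^k * (2^k * (1/2:ℝ)^m) := by
          apply mul_le_mul_of_nonneg_left h2 (by positivity)
      _ = (2*B)^k * ((m:ℝ) * (1/2)^m) := by rw [mul_pow]; ring
  have hnn : (0:ℝ) ≤ (m : ℝ) * (((p m : ℝ)) ^ m)⁻¹ * (2 * π * max (p m : ℝ) (q m : ℝ)) ^ k := by
    positivity
  rwa [Real.norm_eq_abs, abs_of_nonneg hnn]
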